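/- Let G be a directed graph and g a graph trace on G that is bounded, i.e., ‖g‖ := Σ_{v ∈ G⁰} g(v) < ∞. If a vertex v ∈ G⁰ is left infinite, then g(v) = 0. -/

import Mathlib

/-- A directed graph: countable sets of vertices and edges with range and source maps. -/
structure DirGraph where
  V : Type
  E : Type
  countV : Countable V
  countE : Countable E
  r : E → V
  s : E → V

attribute [instance] DirGraph.countV DirGraph.countE

/-- `g : G⁰ → [0,∞)` is a graph trace if (1) for every vertex emitting a finite nonzero
number of edges, `g v = ∑_{s(e)=v} g (r e)`, and (2) for every infinite emitter `v` and
every finite set of edges emitted by `v`, `∑ g (r eᵢ) ≤ g v`. -/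
def DirGraph.IsGraphTrace (G : DirGraph) (g : G.V → NNReal) : Prop :=
  (∀ v : G.V, ({e : G.E | G.s e = v}).Finite → ({e : G.E | G.s e = v}).Nonempty →
      g v = ∑ᶠ e ∈ {e : G.E | G.s e = v}, g (G.r e)) ∧
  (∀ v : G.V, ({e : G.E | G.s e = v}).Infinite →
      ∀ F : Finset G.E, (∀ e ∈ F, G.s e = v) → ∑ e ∈ F, g (G.r e) ≤ g v)

/-- `v ≥ w` : there is a directed path (possibly of length zero) from `v` to `w`. -/
def DirGraph.Reaches (G : DirGraph) : G.V → G.V → Prop :=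
  Relation.ReflTransGen (fun a b => ∃ e : G.E, G.s e = a ∧ G.r e = b)

/-- `L(v)`, the set of vertices that can reach `v`. -/
def DirGraph.L (G : DirGraph) (v : G.V) : Set G.V := {w : G.V | G.Reaches w v}

/-- A vertex is left infinite if `L(v)` is infinite. -/
def DirGraph.LeftInfinite (G : DirGraph) (v : G.V) : Prop := (G.L v).Infinite

/-- A vertex lies on a loop iff there is a directed path of length at least one
from it back to itself. -/
def DirGraph.OnLoop (G : DirGraph) (v : G.V) : Prop :=
  ∃ e : G.E, G.s e = v ∧ G.Reaches (G.r e) v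

/-- A set of vertices is hereditary if it is closed under ranges of edges. -/
def DirGraph.Hereditary (G : DirGraph) (H : Set G.V) : Prop :=
  ∀ e : G.E, G.s e ∈ H → G.r e ∈ H

/-- A set of vertices is saturated if it contains every vertex emitting a finite
nonzero number of edges all of whose ranges lie in the set. -/
def DirGraph.Saturated (G : DirGraph) (H : Set G.V) : Prop :=
  ∀ v : G.V, ({e : G.E | G.s e = v}).Finite → ({e : G.E | G.s e = v}).Nonempty →
    (∀ e : G.E, G.s e = v → G.r e ∈ H) → v ∈ H

/-- The norm `‖g‖ = ∑_{v} g v` of a function on the vertices, as an extended real. -/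
noncomputable def DirGraph.traceNorm (G : DirGraph) (g : G.V → NNReal) : ENNReal :=
  ∑' v : G.V, (g v : ENNReal)


/-- If `g` is a bounded graph trace on `G` and `v` is left infinite, then `g v = 0`. -/
theorem graphTrace_eq_zero_of_leftInfinite (G : DirGraph) (g : G.V → NNReal)
    (hg : G.IsGraphTrace g) (hbdd : G.traceNorm g < ⊤)
    (v : G.V) (hv : G.LeftInfinite v) : g v = 0 := by
  by_contra h
  have step : ∀ a b : G.V, (∃ e : G.E, G.s e = a ∧ G.r e = b) → g b ≤ g a := by
    rintro a b ⟨e, hs, hr⟩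
    by_cases hfin : ({e : G.E | G.s e = a}).Finite
    · have hne : ({e : G.E | G.s e = a}).Nonempty := ⟨e, hs⟩
      rw [hg.1 a hfin hne, finsum_mem_eq_finite_toFinset_sum _ hfin]
      subst hr
      exact Finset.single_le_sum (f := fun e => g (G.r e)) (fun i _ => zero_le) (hfin.mem_toFinset.mpr hs)
    · have := hg.2 a hfin {e} (by simp [hs])
      simpa [hr] using this
  have key : ∀ w ∈ G.L v, g v ≤ g w := by
    intro w hw
    induction hw using Relation.ReflTransGen.head_induction_on with
    | refl => exact le_refl _
    | head hab _ ih => exact le_trans ih (step _ _ hab)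
  haveI := hv.to_subtype
  have h1 : ∑' _ : G.L v, ((g v : ENNReal)) ≤ ∑' w : G.L v, (g w : ENNReal) :=
    ENNReal.tsum_le_tsum fun w => by exact_mod_cast key w w.2
  rw [ENNReal.tsum_const_eq_top_of_ne_zero (by exact_mod_cast h)] at h1
  have h2 : ∑' w : G.L v, (g w : ENNReal) ≤ G.traceNorm g :=
    ENNReal.tsum_comp_le_tsum_of_injective Subtype.val_injective _
  exact absurd (lt_of_le_of_lt (le_trans h1 h2) hbdd) (by simp)
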